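/- If an optimal tree T (minimizing cost_G) contains a subtree T' whose leaf set induces a disconnected subgraph of G, then the topmost split of T' into (V_1, V_2) satisfies w(V_1, V_2) = 0. -/

import Mathlib

open Finset

/-- A rooted binary tree whose leaves are labeled by elements of `Fin n`. -/
inductive HTree (n : ℕ) : Type where
  | leaf : Fin n → HTree n
  | node : HTree n → HTree n → HTree n

namespace HTree

variable {n : ℕ}

/-- The list of leaf labels, left to right. -/
def leafList : HTree n → List (Fin n)
  | .leaf v => [v]
  | .node l r => l.leafList ++ r.leafList

/-- The set of leaf labels of a tree. -/
def leaves (T : HTree n) : Finset (Fin n) := T.leafList.toFinset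

/-- `T` is a hierarchical clustering tree of the whole vertex set `Fin n`:
its leaves are in one-to-one correspondence with `Fin n`. -/
def IsFullTree (T : HTree n) : Prop := T.leafList.Nodup ∧ T.leaves = Finset.univ

/-- `|leaves(T[i ∨ j])|`: the number of leaves of the subtree rooted at the
lowest common ancestor of leaves `i` and `j`. -/
def lcaSize : HTree n → Fin n → Fin n → ℕ
  | .leaf _, _, _ => 1
  | .node l r, i, j =>
    if i ∈ l.leaves ∧ j ∈ l.leaves then l.lcaSize i j
    else if i ∈ r.leaves ∧ j ∈ r.leaves then r.lcaSize i j
    else (l.leaves ∪ r.leaves).card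

/-- `cost_G(T) = Σ_{{i,j}} w_{ij} |leaves(T[i ∨ j])|`, the sum being over
unordered pairs (represented as ordered pairs `p.1 < p.2`). -/
def pairCost (w : Fin n → Fin n → ℝ) (T : HTree n) : ℝ :=
  ∑ p ∈ Finset.univ.filter (fun p : Fin n × Fin n => p.1 < p.2),
    w p.1 p.2 * (T.lcaSize p.1 p.2 : ℝ)

/-- `w(A, B)`: total weight of edges between `A` and `B`. -/
def cut (w : Fin n → Fin n → ℝ) (A B : Finset (Fin n)) : ℝ :=
  ∑ i ∈ A, ∑ j ∈ B, w i j

/-- The sum-of-splits formulation of the cost: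
`Σ over internal splits S → (S₁,S₂) of |S| ⬝ w(S₁,S₂)`. -/
def splitCost (w : Fin n → Fin n → ℝ) : HTree n → ℝ
  | .leaf _ => 0
  | .node l r =>
      ((l.leaves ∪ r.leaves).card : ℝ) * cut w l.leaves r.leaves
        + splitCost w l + splitCost w r

/-- `Subtree t T`: `t` occurs as a subtree of `T`. -/
inductive Subtree : HTree n → HTree n → Prop
  | refl (t : HTree n) : Subtree t t
  | left {t l r : HTree n} : Subtree t l → Subtree t (.node l r)
  | right {t l r : HTree n} : Subtree t r → Subtree t (.node l r)

end HTree

namespace HTree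

variable {n : ℕ}

lemma leafList_ne_nil (t : HTree n) : t.leafList ≠ [] := by
  induction t with
  | leaf v => simp [leafList]
  | node l r ihl ihr => simp [leafList, ihl]

@[simp] lemma leaves_leaf (v : Fin n) : (leaf v : HTree n).leaves = {v} := rfl

@[simp] lemma leaves_node (l r : HTree n) :
    (node l r).leaves = l.leaves ∪ r.leaves := by
  simp [leaves, leafList]

lemma mem_leaves {a : Fin n} {t : HTree n} : a ∈ t.leaves ↔ a ∈ t.leafList :=
  List.mem_toFinset

lemma sublist_of_subtree {t T : HTree n} (h : Subtree t T) :
    t.leafList.Sublist T.leafList := by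
  induction h with
  | refl => exact List.Sublist.refl _
  | left h ih => exact ih.trans (by simp only [leafList]; exact List.sublist_append_left _ _)
  | right h ih => exact ih.trans (by simp only [leafList]; exact List.sublist_append_right _ _)

lemma disjoint_leaves_of_nodup {l r : HTree n} (h : (node l r).leafList.Nodup) :
    Disjoint l.leaves r.leaves := by
  rw [leafList, List.nodup_append] at h
  rw [Finset.disjoint_left]
  intro a ha hb
  exact h.2.2 _ (mem_leaves.mp ha) _ (mem_leaves.mp hb) rfl

/-! ### cut lemmas -/

variable {w : Fin n → Fin n → ℝ}

lemma cut_nonneg (hnn : ∀ i j, 0 ≤ w i j) (A B : Finset (Fin n)) : 0 ≤ cut w A B :=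
  Finset.sum_nonneg fun i _ => Finset.sum_nonneg fun j _ => hnn i j

@[simp] lemma cut_empty_left (B : Finset (Fin n)) : cut w ∅ B = 0 := by simp [cut]

@[simp] lemma cut_empty_right (A : Finset (Fin n)) : cut w A ∅ = 0 := by simp [cut]

lemma cut_mono (hnn : ∀ i j, 0 ≤ w i j) {A' A B' B : Finset (Fin n)}
    (hA : A' ⊆ A) (hB : B' ⊆ B) : cut w A' B' ≤ cut w A B := by
  unfold cut
  calc ∑ i ∈ A', ∑ j ∈ B', w i j
      ≤ ∑ i ∈ A', ∑ j ∈ B, w i j :=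
        Finset.sum_le_sum fun i _ =>
          Finset.sum_le_sum_of_subset_of_nonneg hB (fun j _ _ => hnn i j)
    _ ≤ ∑ i ∈ A, ∑ j ∈ B, w i j :=
        Finset.sum_le_sum_of_subset_of_nonneg hA
          (fun i _ _ => Finset.sum_nonneg fun j _ => hnn i j)

lemma cut_union_left {A₁ A₂ B : Finset (Fin n)} (h : Disjoint A₁ A₂) :
    cut w (A₁ ∪ A₂) B = cut w A₁ B + cut w A₂ B := Finset.sum_union h

lemma cut_union_right {A B₁ B₂ : Finset (Fin n)} (h : Disjoint B₁ B₂) :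
    cut w A (B₁ ∪ B₂) = cut w A B₁ + cut w A B₂ := by
  unfold cut
  rw [← Finset.sum_add_distrib]
  exact Finset.sum_congr rfl fun i _ => Finset.sum_union h

lemma cut_comm (hs : ∀ i j, w i j = w j i) (A B : Finset (Fin n)) :
    cut w A B = cut w B A := by
  unfold cut
  rw [Finset.sum_comm]
  exact Finset.sum_congr rfl fun j _ => Finset.sum_congr rfl fun i _ => hs i j

lemma cut_pair_le (hnn : ∀ i j, 0 ≤ w i j) {A₁ A₂ A B₁ B₂ B : Finset (Fin n)}
    (hA1 : A₁ ⊆ A) (hA2 : A₂ ⊆ A) (hB1 : B₁ ⊆ B) (hB2 : B₂ ⊆ B)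
    (hA : Disjoint A₁ A₂) :
    cut w A₁ B₁ + cut w A₂ B₂ ≤ cut w A B :=
  calc cut w A₁ B₁ + cut w A₂ B₂
      ≤ cut w A₁ B + cut w A₂ B :=
        add_le_add (cut_mono hnn (subset_refl _) hB1) (cut_mono hnn (subset_refl _) hB2)
    _ = cut w (A₁ ∪ A₂) B := (cut_union_left hA).symm
    _ ≤ cut w A B := cut_mono hnn (Finset.union_subset hA1 hA2) (subset_refl _)

end HTree
namespace HTree

variable {n : ℕ} {w : Fin n → Fin n → ℝ}

/-! ### pairCost = splitCost -/

/-- ordered pairs `p.1 < p.2` with both coordinates in `S` -/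
def pairsOf (S : Finset (Fin n)) : Finset (Fin n × Fin n) :=
  (S ×ˢ S).filter fun p => p.1 < p.2

lemma pairsOf_union (A B : Finset (Fin n)) :
    pairsOf (A ∪ B) =
      (pairsOf A ∪ pairsOf B) ∪
        ((A ×ˢ B ∪ B ×ˢ A).filter fun p : Fin n × Fin n => p.1 < p.2) := by
  ext p
  simp only [pairsOf, Finset.mem_filter, Finset.mem_union, Finset.mem_product]
  tauto

lemma sum_cross (hs : ∀ i j, w i j = w j i) {A B : Finset (Fin n)}
    (hAB : Disjoint A B) :
    ∑ p ∈ (A ×ˢ B ∪ B ×ˢ A).filter (fun p : Fin n × Fin n => p.1 < p.2), w p.1 p.2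
      = cut w A B := by
  have hd : Disjoint ((A ×ˢ B).filter fun p : Fin n × Fin n => p.1 < p.2)
      ((B ×ˢ A).filter fun p : Fin n × Fin n => p.1 < p.2) := by
    rw [Finset.disjoint_left]
    intro p hp hq
    simp only [Finset.mem_filter, Finset.mem_product] at hp hq
    exact (Finset.disjoint_left.mp hAB hp.1.1) hq.1.1
  rw [Finset.filter_union, Finset.sum_union hd]
  have h2 : ∑ p ∈ (B ×ˢ A).filter (fun p : Fin n × Fin n => p.1 < p.2), w p.1 p.2
      = ∑ p ∈ (A ×ˢ B).filter (fun p : Fin n × Fin n => p.2 < p.1), w p.1 p.2 := by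
    apply Finset.sum_equiv (Equiv.prodComm (Fin n) (Fin n))
    · intro p
      simp only [Finset.mem_filter, Finset.mem_product, Equiv.prodComm_apply, Prod.fst_swap,
        Prod.snd_swap]
      tauto
    · intro p _
      exact hs p.1 p.2
  rw [h2]
  have h3 : (A ×ˢ B).filter (fun p : Fin n × Fin n => p.2 < p.1)
      = (A ×ˢ B).filter (fun p : Fin n × Fin n => ¬ p.1 < p.2) := by
    apply Finset.filter_congr
    intro p hp
    simp only [Finset.mem_product] at hp
    have hne : p.1 ≠ p.2 := fun h => (Finset.disjoint_left.mp hAB hp.1) (h ▸ hp.2)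
    constructor
    · intro h; simp; exact le_of_lt h
    · intro h; simp at h; exact lt_of_le_of_ne h (Ne.symm hne)
  rw [h3, Finset.sum_filter_add_sum_filter_not]
  rw [Finset.sum_product]
  rfl

lemma pairCostOn_eq_splitCost (hs : ∀ i j, w i j = w j i) (t : HTree n)
    (hnd : t.leafList.Nodup) :
    ∑ p ∈ pairsOf t.leaves, w p.1 p.2 * (t.lcaSize p.1 p.2 : ℝ) = splitCost w t := by
  induction t with
  | leaf v =>
    rw [splitCost]
    apply Finset.sum_eq_zero
    intro p hp
    simp only [pairsOf, leaves_leaf, Finset.mem_filter, Finset.mem_product,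
      Finset.mem_singleton] at hp
    exact absurd (hp.1.1 ▸ hp.1.2 ▸ hp.2) (lt_irrefl _)
  | node l r ihl ihr =>
    have hnd' := hnd
    rw [leafList, List.nodup_append] at hnd'
    obtain ⟨hl, hr, hdisj'⟩ := hnd'
    have hAB : Disjoint l.leaves r.leaves := disjoint_leaves_of_nodup hnd
    rw [leaves_node, pairsOf_union]
    have hd1 : Disjoint (pairsOf l.leaves) (pairsOf r.leaves) := by
      rw [Finset.disjoint_left]
      intro p hp hq
      simp only [pairsOf, Finset.mem_filter, Finset.mem_product] at hp hq
      exact (Finset.disjoint_left.mp hAB hp.1.1) hq.1.1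
    have hd2 : Disjoint (pairsOf l.leaves ∪ pairsOf r.leaves)
        ((l.leaves ×ˢ r.leaves ∪ r.leaves ×ˢ l.leaves).filter
          fun p : Fin n × Fin n => p.1 < p.2) := by
      rw [Finset.disjoint_left]
      intro p hp hq
      simp only [pairsOf, Finset.mem_filter, Finset.mem_product, Finset.mem_union] at hp hq
      rcases hp with hp | hp <;> rcases hq.1 with hq1 | hq1
      · exact (Finset.disjoint_left.mp hAB hp.1.2) hq1.2
      · exact (Finset.disjoint_left.mp hAB hp.1.1) hq1.1
      · exact (Finset.disjoint_left.mp hAB hq1.1) hp.1.1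
      · exact (Finset.disjoint_left.mp hAB hq1.2) hp.1.2
    rw [Finset.sum_union hd2, Finset.sum_union hd1]
    have S1 : ∑ p ∈ pairsOf l.leaves, w p.1 p.2 * ((node l r).lcaSize p.1 p.2 : ℝ)
        = splitCost w l := by
      rw [← ihl hl]
      apply Finset.sum_congr rfl
      intro p hp
      simp only [pairsOf, Finset.mem_filter, Finset.mem_product] at hp
      rw [lcaSize, if_pos ⟨hp.1.1, hp.1.2⟩]
    have S2 : ∑ p ∈ pairsOf r.leaves, w p.1 p.2 * ((node l r).lcaSize p.1 p.2 : ℝ)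
        = splitCost w r := by
      rw [← ihr hr]
      apply Finset.sum_congr rfl
      intro p hp
      simp only [pairsOf, Finset.mem_filter, Finset.mem_product] at hp
      have h1 : ¬ (p.1 ∈ l.leaves ∧ p.2 ∈ l.leaves) := by
        intro h
        exact (Finset.disjoint_left.mp hAB h.1) hp.1.1
      rw [lcaSize, if_neg h1, if_pos ⟨hp.1.1, hp.1.2⟩]
    have S3 : ∑ p ∈ (l.leaves ×ˢ r.leaves ∪ r.leaves ×ˢ l.leaves).filter
          (fun p : Fin n × Fin n => p.1 < p.2),
          w p.1 p.2 * ((node l r).lcaSize p.1 p.2 : ℝ)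
        = ((l.leaves ∪ r.leaves).card : ℝ) * cut w l.leaves r.leaves := by
      have : ∀ p ∈ (l.leaves ×ˢ r.leaves ∪ r.leaves ×ˢ l.leaves).filter
          (fun p : Fin n × Fin n => p.1 < p.2),
          w p.1 p.2 * ((node l r).lcaSize p.1 p.2 : ℝ)
            = w p.1 p.2 * ((l.leaves ∪ r.leaves).card : ℝ) := by
        intro p hp
        simp only [Finset.mem_filter, Finset.mem_union, Finset.mem_product] at hp
        have h1 : ¬ (p.1 ∈ l.leaves ∧ p.2 ∈ l.leaves) := by
          rintro ⟨ha, hb⟩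
          rcases hp.1 with h | h
          · exact (Finset.disjoint_left.mp hAB hb) h.2
          · exact (Finset.disjoint_left.mp hAB ha) h.1
        have h2 : ¬ (p.1 ∈ r.leaves ∧ p.2 ∈ r.leaves) := by
          rintro ⟨ha, hb⟩
          rcases hp.1 with h | h
          · exact (Finset.disjoint_left.mp hAB h.1) ha
          · exact (Finset.disjoint_left.mp hAB h.2) hb
        rw [lcaSize, if_neg h1, if_neg h2]
      rw [Finset.sum_congr rfl this, ← Finset.sum_mul, sum_cross hs hAB, mul_comm]
    rw [S1, S2, S3, splitCost]
    ring

lemma pairCost_eq_splitCost (hs : ∀ i j, w i j = w j i) (T : HTree n)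
    (hT : T.IsFullTree) : pairCost w T = splitCost w T := by
  rw [← pairCostOn_eq_splitCost hs T hT.1, pairCost]
  apply Finset.sum_congr _ fun _ _ => rfl
  rw [pairsOf, hT.2, Finset.univ_product_univ]

end HTree
namespace HTree

variable {n : ℕ} {w : Fin n → Fin n → ℝ}

/-! ### restriction of a tree to a leaf subset -/

/-- combine two optional trees into one -/
def ocomb : Option (HTree n) → Option (HTree n) → Option (HTree n)
  | some a, some b => some (node a b)
  | some a, none => some a
  | none, b => b

/-- restrict a tree to the leaves in `U` -/
def restrict (U : Finset (Fin n)) : HTree n → Option (HTree n)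
  | .leaf v => if v ∈ U then some (.leaf v) else none
  | .node l r => ocomb (restrict U l) (restrict U r)

def oLeafList (o : Option (HTree n)) : List (Fin n) := o.elim [] leafList

def oLeaves (o : Option (HTree n)) : Finset (Fin n) := (oLeafList o).toFinset

def osplit (w : Fin n → Fin n → ℝ) (o : Option (HTree n)) : ℝ := o.elim 0 (splitCost w)

lemma oLeafList_ocomb (a b : Option (HTree n)) :
    oLeafList (ocomb a b) = oLeafList a ++ oLeafList b := by
  cases a <;> cases b <;> simp [ocomb, oLeafList, leafList]

lemma oLeaves_some (t : HTree n) : oLeaves (some t) = t.leaves := rfl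

lemma oLeafList_restrict (U : Finset (Fin n)) (t : HTree n) :
    oLeafList (restrict U t) = t.leafList.filter (· ∈ U) := by
  induction t with
  | leaf v => by_cases h : v ∈ U <;> simp [restrict, oLeafList, leafList, h]
  | node l r ihl ihr =>
    rw [show restrict U (node l r) = ocomb (restrict U l) (restrict U r) from rfl,
      oLeafList_ocomb, ihl, ihr, leafList, List.filter_append]

lemma oLeaves_restrict (U : Finset (Fin n)) (t : HTree n) :
    oLeaves (restrict U t) = t.leaves ∩ U := by
  ext a
  simp [oLeaves, oLeafList_restrict, leaves, List.mem_filter]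

lemma osplit_ocomb_le (hnn : ∀ i j, 0 ≤ w i j) (a b : Option (HTree n)) :
    osplit w (ocomb a b) ≤
      ((oLeaves a ∪ oLeaves b).card : ℝ) * cut w (oLeaves a) (oLeaves b)
        + osplit w a + osplit w b := by
  cases a with
  | none =>
    cases b <;> simp [ocomb, osplit, oLeaves, oLeafList]
  | some a' =>
    cases b with
    | none => simp [ocomb, osplit, oLeaves, oLeafList]
    | some b' =>
      apply le_of_eq
      simp only [ocomb, osplit, Option.elim, splitCost, oLeaves, oLeafList]
      rw [show (a'.leafList.toFinset : Finset (Fin n)) = a'.leaves from rfl,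
        show (b'.leafList.toFinset : Finset (Fin n)) = b'.leaves from rfl]

lemma osplit_restrict_pair (hnn : ∀ i j, 0 ≤ w i j) {U V : Finset (Fin n)}
    (hUV : Disjoint U V) (t : HTree n) :
    osplit w (restrict U t) + osplit w (restrict V t) ≤ splitCost w t := by
  induction t with
  | leaf v =>
    by_cases h1 : v ∈ U <;> by_cases h2 : v ∈ V <;>
      simp [restrict, osplit, splitCost, h1, h2]
  | node l r ihl ihr =>
    have e1 : restrict U (node l r) = ocomb (restrict U l) (restrict U r) := rfl
    have e2 : restrict V (node l r) = ocomb (restrict V l) (restrict V r) := rfl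
    rw [e1, e2]
    have h1 := osplit_ocomb_le hnn (restrict U l) (restrict U r)
    have h2 := osplit_ocomb_le hnn (restrict V l) (restrict V r)
    rw [oLeaves_restrict, oLeaves_restrict] at h1 h2
    set m : ℝ := ((l.leaves ∪ r.leaves).card : ℝ) with hm
    have hcard1 : ((l.leaves ∩ U ∪ r.leaves ∩ U).card : ℝ) ≤ m := by
      rw [hm]
      exact_mod_cast Finset.card_le_card
        (Finset.union_subset_union Finset.inter_subset_left Finset.inter_subset_left)
    have hcard2 : ((l.leaves ∩ V ∪ r.leaves ∩ V).card : ℝ) ≤ m := by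
      rw [hm]
      exact_mod_cast Finset.card_le_card
        (Finset.union_subset_union Finset.inter_subset_left Finset.inter_subset_left)
    have hc1 : 0 ≤ cut w (l.leaves ∩ U) (r.leaves ∩ U) := cut_nonneg hnn _ _
    have hc2 : 0 ≤ cut w (l.leaves ∩ V) (r.leaves ∩ V) := cut_nonneg hnn _ _
    have hdUV : Disjoint (l.leaves ∩ U) (l.leaves ∩ V) :=
      Disjoint.mono Finset.inter_subset_right Finset.inter_subset_right hUV
    have hcross : cut w (l.leaves ∩ U) (r.leaves ∩ U)
          + cut w (l.leaves ∩ V) (r.leaves ∩ V) ≤ cut w l.leaves r.leaves :=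
      cut_pair_le hnn Finset.inter_subset_left Finset.inter_subset_left
        Finset.inter_subset_left Finset.inter_subset_left hdUV
    have hb1 : ((l.leaves ∩ U ∪ r.leaves ∩ U).card : ℝ)
        * cut w (l.leaves ∩ U) (r.leaves ∩ U)
        ≤ m * cut w (l.leaves ∩ U) (r.leaves ∩ U) :=
      mul_le_mul_of_nonneg_right hcard1 hc1
    have hb2 : ((l.leaves ∩ V ∪ r.leaves ∩ V).card : ℝ)
        * cut w (l.leaves ∩ V) (r.leaves ∩ V)
        ≤ m * cut w (l.leaves ∩ V) (r.leaves ∩ V) :=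
      mul_le_mul_of_nonneg_right hcard2 hc2
    have hmnn : (0 : ℝ) ≤ m := by positivity
    have hmul : m * (cut w (l.leaves ∩ U) (r.leaves ∩ U)
        + cut w (l.leaves ∩ V) (r.leaves ∩ V)) ≤ m * cut w l.leaves r.leaves :=
      mul_le_mul_of_nonneg_left hcross hmnn
    rw [splitCost]
    have := ihl
    have := ihr
    nlinarith [ihl, ihr, h1, h2]

/-! ### replacing a subtree by one with the same leaf set -/

lemma replace_subtree (w : Fin n → Fin n → ℝ) {t T : HTree n} (hsub : Subtree t T)
    (t'' : HTree n) (hlv : t''.leaves = t.leaves) (hnd : t''.leafList.Nodup) :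
    T.leafList.Nodup →
    ∃ T'' : HTree n, T''.leaves = T.leaves ∧ T''.leafList.Nodup ∧
      splitCost w T'' + splitCost w t = splitCost w T + splitCost w t'' := by
  induction hsub with
  | refl => exact fun _ => ⟨t'', hlv, hnd, by ring⟩
  | @left l' r' hsub ih =>
    intro hT
    have hT' := hT
    rw [leafList, List.nodup_append] at hT'
    obtain ⟨hl', hr', hdisj⟩ := hT'
    obtain ⟨L, hL1, hL2, hL3⟩ := ih hl'
    refine ⟨node L r', by rw [leaves_node, leaves_node, hL1], ?_, ?_⟩
    · rw [leafList, List.nodup_append]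
      refine ⟨hL2, hr', ?_⟩
      intro a ha b hb hab; rw [← hab] at hb
      have : a ∈ l'.leaves := hL1 ▸ mem_leaves.mpr ha
      exact hdisj _ (mem_leaves.mp this) _ hb rfl
    · rw [show splitCost w (node L r')
          = ((L.leaves ∪ r'.leaves).card : ℝ) * cut w L.leaves r'.leaves
            + splitCost w L + splitCost w r' from rfl,
        show splitCost w (node l' r')
          = ((l'.leaves ∪ r'.leaves).card : ℝ) * cut w l'.leaves r'.leaves
            + splitCost w l' + splitCost w r' from rfl, hL1]
      linarith [hL3]
  | @right l' r' hsub ih =>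
    intro hT
    have hT' := hT
    rw [leafList, List.nodup_append] at hT'
    obtain ⟨hl', hr', hdisj⟩ := hT'
    obtain ⟨R, hR1, hR2, hR3⟩ := ih hr'
    refine ⟨node l' R, by rw [leaves_node, leaves_node, hR1], ?_, ?_⟩
    · rw [leafList, List.nodup_append]
      refine ⟨hl', hR2, ?_⟩
      intro a ha b hb hab; rw [← hab] at hb
      have : a ∈ r'.leaves := hR1 ▸ mem_leaves.mpr hb
      exact hdisj _ ha _ (mem_leaves.mp this) rfl
    · rw [show splitCost w (node l' R)
          = ((l'.leaves ∪ R.leaves).card : ℝ) * cut w l'.leaves R.leaves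
            + splitCost w l' + splitCost w R from rfl,
        show splitCost w (node l' r')
          = ((l'.leaves ∪ r'.leaves).card : ℝ) * cut w l'.leaves r'.leaves
            + splitCost w l' + splitCost w r' from rfl, hR1]
      linarith [hR3]

end HTree
/-- If an optimal tree contains a subtree whose leaf set induces a disconnected
subgraph of `G`, then the topmost split `(V₁, V₂)` of that subtree has `w(V₁,V₂) = 0`. -/
theorem optimal_tree_splits_components (n : ℕ) (w : Fin n → Fin n → ℝ)
    (hsymm : ∀ i j, w i j = w j i) (hnonneg : ∀ i j, 0 ≤ w i j)
    (T : HTree n) (hT : T.IsFullTree)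
    (hopt : ∀ T' : HTree n, T'.IsFullTree → T.pairCost w ≤ T'.pairCost w)
    (l r : HTree n) (hsub : HTree.Subtree (.node l r) T)
    (U₁ U₂ : Finset (Fin n)) (hU₁ : U₁.Nonempty) (hU₂ : U₂.Nonempty)
    (hdisj : Disjoint U₁ U₂) (hunion : U₁ ∪ U₂ = l.leaves ∪ r.leaves)
    (hcut : HTree.cut w U₁ U₂ = 0) :
    HTree.cut w l.leaves r.leaves = 0 := by
  classical
  open HTree in
  obtain ⟨hTnd, hTuniv⟩ := hT
  have htnd : (HTree.node l r).leafList.Nodup :=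
    hTnd.sublist (HTree.sublist_of_subtree hsub)
  have hAB : Disjoint l.leaves r.leaves := HTree.disjoint_leaves_of_nodup htnd
  have hlvt : (HTree.node l r).leaves = U₁ ∪ U₂ := by
    rw [HTree.leaves_node, hunion]
  have hAsub : l.leaves ⊆ U₁ ∪ U₂ := by rw [hunion]; exact Finset.subset_union_left
  have hBsub : r.leaves ⊆ U₁ ∪ U₂ := by rw [hunion]; exact Finset.subset_union_right
  -- cross cuts between the two components vanish
  have hc12 : HTree.cut w (l.leaves ∩ U₁) (r.leaves ∩ U₂) = 0 :=
    le_antisymm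
      (hcut ▸ HTree.cut_mono hnonneg Finset.inter_subset_right Finset.inter_subset_right)
      (HTree.cut_nonneg hnonneg _ _)
  have hcut' : HTree.cut w U₂ U₁ = 0 := by rw [HTree.cut_comm hsymm, hcut]
  have hc21 : HTree.cut w (l.leaves ∩ U₂) (r.leaves ∩ U₁) = 0 :=
    le_antisymm
      (hcut' ▸ HTree.cut_mono hnonneg Finset.inter_subset_right Finset.inter_subset_right)
      (HTree.cut_nonneg hnonneg _ _)
  set c₁ := HTree.cut w (l.leaves ∩ U₁) (r.leaves ∩ U₁) with hc₁def
  set c₂ := HTree.cut w (l.leaves ∩ U₂) (r.leaves ∩ U₂) with hc₂def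
  have hc1nn : 0 ≤ c₁ := HTree.cut_nonneg hnonneg _ _
  have hc2nn : 0 ≤ c₂ := HTree.cut_nonneg hnonneg _ _
  have dA : Disjoint (l.leaves ∩ U₁) (l.leaves ∩ U₂) :=
    hdisj.mono Finset.inter_subset_right Finset.inter_subset_right
  have dB : Disjoint (r.leaves ∩ U₁) (r.leaves ∩ U₂) :=
    hdisj.mono Finset.inter_subset_right Finset.inter_subset_right
  have hdecomp : HTree.cut w l.leaves r.leaves = c₁ + c₂ := by
    have e : HTree.cut w l.leaves r.leaves
        = HTree.cut w ((l.leaves ∩ U₁) ∪ (l.leaves ∩ U₂))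
            ((r.leaves ∩ U₁) ∪ (r.leaves ∩ U₂)) := by
      rw [← Finset.inter_union_distrib_left, ← Finset.inter_union_distrib_left,
        Finset.inter_eq_left.mpr hAsub, Finset.inter_eq_left.mpr hBsub]
    rw [e, HTree.cut_union_left dA, HTree.cut_union_right dB, HTree.cut_union_right dB,
      hc12, hc21]
    ring
  -- the restricted trees
  have hrest1 : ∃ t₁, HTree.restrict U₁ (HTree.node l r) = some t₁ := by
    cases h : HTree.restrict U₁ (HTree.node l r) with
    | none =>
      exfalso
      have := HTree.oLeaves_restrict U₁ (HTree.node l r)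
      rw [h, hlvt, Finset.inter_eq_right.mpr Finset.subset_union_left] at this
      have : (∅ : Finset (Fin n)) = U₁ := this
      exact hU₁.ne_empty this.symm
    | some t₁ => exact ⟨t₁, rfl⟩
  have hrest2 : ∃ t₂, HTree.restrict U₂ (HTree.node l r) = some t₂ := by
    cases h : HTree.restrict U₂ (HTree.node l r) with
    | none =>
      exfalso
      have := HTree.oLeaves_restrict U₂ (HTree.node l r)
      rw [h, hlvt, Finset.inter_eq_right.mpr Finset.subset_union_right] at this
      have : (∅ : Finset (Fin n)) = U₂ := this
      exact hU₂.ne_empty this.symm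
    | some t₂ => exact ⟨t₂, rfl⟩
  obtain ⟨t₁, h1⟩ := hrest1
  obtain ⟨t₂, h2⟩ := hrest2
  have ht1lv : t₁.leaves = U₁ := by
    have := HTree.oLeaves_restrict U₁ (HTree.node l r)
    rw [h1, hlvt, Finset.inter_eq_right.mpr Finset.subset_union_left] at this
    exact this
  have ht2lv : t₂.leaves = U₂ := by
    have := HTree.oLeaves_restrict U₂ (HTree.node l r)
    rw [h2, hlvt, Finset.inter_eq_right.mpr Finset.subset_union_right] at this
    exact this
  have ht1nd : t₁.leafList.Nodup := by
    have := HTree.oLeafList_restrict U₁ (HTree.node l r)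
    rw [h1] at this
    rw [show HTree.oLeafList (some t₁) = t₁.leafList from rfl] at this
    rw [this]
    exact htnd.filter _
  have ht2nd : t₂.leafList.Nodup := by
    have := HTree.oLeafList_restrict U₂ (HTree.node l r)
    rw [h2] at this
    rw [show HTree.oLeafList (some t₂) = t₂.leafList from rfl] at this
    rw [this]
    exact htnd.filter _
  -- the improved subtree
  have hlv'' : (HTree.node t₁ t₂).leaves = (HTree.node l r).leaves := by
    rw [HTree.leaves_node, ht1lv, ht2lv, hlvt]
  have hnd'' : (HTree.node t₁ t₂).leafList.Nodup := by
    rw [HTree.leafList, List.nodup_append]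
    refine ⟨ht1nd, ht2nd, ?_⟩
    intro a ha b hb hab; rw [← hab] at hb
    have ha' : a ∈ U₁ := ht1lv ▸ HTree.mem_leaves.mpr ha
    have hb' : a ∈ U₂ := ht2lv ▸ HTree.mem_leaves.mpr hb
    exact Finset.disjoint_left.mp hdisj ha' hb'
  obtain ⟨T'', hT''lv, hT''nd, heq⟩ :=
    HTree.replace_subtree w hsub (HTree.node t₁ t₂) hlv'' hnd'' hTnd
  have hfull'' : T''.IsFullTree := ⟨hT''nd, hT''lv.trans hTuniv⟩
  have hle : HTree.splitCost w (HTree.node l r) ≤ HTree.splitCost w (HTree.node t₁ t₂) := by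
    have h := hopt T'' hfull''
    rw [HTree.pairCost_eq_splitCost hsymm T ⟨hTnd, hTuniv⟩,
      HTree.pairCost_eq_splitCost hsymm T'' hfull''] at h
    linarith [heq]
  -- evaluate the cost of the improved subtree
  have hsplit'' : HTree.splitCost w (HTree.node t₁ t₂)
      = HTree.splitCost w t₁ + HTree.splitCost w t₂ := by
    rw [show HTree.splitCost w (HTree.node t₁ t₂)
        = ((t₁.leaves ∪ t₂.leaves).card : ℝ) * HTree.cut w t₁.leaves t₂.leaves
          + HTree.splitCost w t₁ + HTree.splitCost w t₂ from rfl, ht1lv, ht2lv, hcut]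
    ring
  have hb1 : HTree.splitCost w t₁ ≤ (U₁.card : ℝ) * c₁
      + HTree.osplit w (HTree.restrict U₁ l) + HTree.osplit w (HTree.restrict U₁ r) := by
    have h := HTree.osplit_ocomb_le hnonneg (HTree.restrict U₁ l) (HTree.restrict U₁ r)
    rw [HTree.oLeaves_restrict, HTree.oLeaves_restrict] at h
    have hcard : (l.leaves ∩ U₁) ∪ (r.leaves ∩ U₁) = U₁ := by
      rw [← Finset.union_inter_distrib_right, ← hunion]
      exact Finset.inter_eq_right.mpr Finset.subset_union_left
    rw [hcard] at h
    have e : HTree.osplit w (HTree.ocomb (HTree.restrict U₁ l) (HTree.restrict U₁ r))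
        = HTree.splitCost w t₁ := by
      rw [show HTree.ocomb (HTree.restrict U₁ l) (HTree.restrict U₁ r)
          = HTree.restrict U₁ (HTree.node l r) from rfl, h1]
      rfl
    rw [e] at h
    exact h
  have hb2 : HTree.splitCost w t₂ ≤ (U₂.card : ℝ) * c₂
      + HTree.osplit w (HTree.restrict U₂ l) + HTree.osplit w (HTree.restrict U₂ r) := by
    have h := HTree.osplit_ocomb_le hnonneg (HTree.restrict U₂ l) (HTree.restrict U₂ r)
    rw [HTree.oLeaves_restrict, HTree.oLeaves_restrict] at h
    have hcard : (l.leaves ∩ U₂) ∪ (r.leaves ∩ U₂) = U₂ := by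
      rw [← Finset.union_inter_distrib_right, ← hunion]
      exact Finset.inter_eq_right.mpr Finset.subset_union_right
    rw [hcard] at h
    have e : HTree.osplit w (HTree.ocomb (HTree.restrict U₂ l) (HTree.restrict U₂ r))
        = HTree.splitCost w t₂ := by
      rw [show HTree.ocomb (HTree.restrict U₂ l) (HTree.restrict U₂ r)
          = HTree.restrict U₂ (HTree.node l r) from rfl, h2]
      rfl
    rw [e] at h
    exact h
  have hpl := HTree.osplit_restrict_pair hnonneg hdisj l
  have hpr := HTree.osplit_restrict_pair hnonneg hdisj r
  have hm : (l.leaves ∪ r.leaves).card = U₁.card + U₂.card := by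
    rw [← hunion, Finset.card_union_of_disjoint hdisj]
  have E0 : HTree.splitCost w (HTree.node l r)
      = ((U₁.card : ℝ) + (U₂.card : ℝ)) * (c₁ + c₂)
        + HTree.splitCost w l + HTree.splitCost w r := by
    rw [show HTree.splitCost w (HTree.node l r)
        = ((l.leaves ∪ r.leaves).card : ℝ) * HTree.cut w l.leaves r.leaves
          + HTree.splitCost w l + HTree.splitCost w r from rfl, hdecomp, hm]
    push_cast
    ring
  have h1le : (1 : ℝ) ≤ (U₁.card : ℝ) := by
    exact_mod_cast Nat.one_le_iff_ne_zero.mpr (Finset.card_ne_zero.mpr hU₁)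
  have h2le : (1 : ℝ) ≤ (U₂.card : ℝ) := by
    exact_mod_cast Nat.one_le_iff_ne_zero.mpr (Finset.card_ne_zero.mpr hU₂)
  have g1 : c₁ ≤ (U₂.card : ℝ) * c₁ := le_mul_of_one_le_left hc1nn h2le
  have g2 : c₂ ≤ (U₁.card : ℝ) * c₂ := le_mul_of_one_le_left hc2nn h1le
  rw [hdecomp]
  nlinarith [hle, hsplit'', hb1, hb2, hpl, hpr, E0, g1, g2, hc1nn, hc2nn]
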